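/- Let (X,U,p,r,γ) be a finite MDP with rewards satisfying 0 ≤ r(x,u) ≤ 1 for all (x,u). Let π_b (behavior policy), π_i, and π_{i+1} be policies whose state–action value functions satisfy their Bellman equations, with value functions V^{π_i}, V^{π_{i+1}} and advantage function A^{π_i}. Let μ be a probability mass function on X and d_{π_b} the discounted state visitation distribution of π_b with initial distribution μ. Then Σ_{x∈X} d_{π_b}(x) Σ_{u∈U} π_b(u|x) A^{π_i}(x,u) − (2/(1−γ)) Σ_{x∈X} d_{π_b}(x) D_TV(π_b(·|x), π_{i+1}(·|x)) ≤ (1−γ) ( Σ_{x∈X} μ(x) V^{π_{i+1}}(x) − Σ_{x∈X} μ(x) V^{π_i}(x) ). (Corollary 1.) -/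
import Mathlib


open Finset

lemma q_bounds {X U : Type*} [Fintype X] [Fintype U] [Nonempty X] [Nonempty U]
    (γ : ℝ) (hγ0 : 0 ≤ γ) (hγ1 : γ < 1)
    (p : X → U → X → ℝ)
    (hp_nonneg : ∀ x u x', 0 ≤ p x u x')
    (hp_sum : ∀ x u, ∑ x', p x u x' = 1)
    (r : X → U → ℝ)
    (hr0 : ∀ x u, 0 ≤ r x u) (hr1 : ∀ x u, r x u ≤ 1)
    (π : X → U → ℝ)
    (hπ_nonneg : ∀ x u, 0 ≤ π x u) (hπ_sum : ∀ x, ∑ u, π x u = 1)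
    (Q : X → U → ℝ)
    (hQ : ∀ x u, Q x u = r x u + γ * ∑ x', p x u x' * ∑ u', π x' u' * Q x' u') :
    ∀ x u, 0 ≤ Q x u ∧ Q x u ≤ 1 / (1 - γ) := by
  have h1γ : (0:ℝ) < 1 - γ := by linarith
  have hlo : ∀ x u, 0 ≤ Q x u := by
    obtain ⟨m, -, hm⟩ := Finset.exists_min_image (Finset.univ : Finset (X × U))
      (fun q => Q q.1 q.2) ⟨⟨Classical.arbitrary X, Classical.arbitrary U⟩, mem_univ _⟩
    have hmin : ∀ x u, Q m.1 m.2 ≤ Q x u := fun x u => hm (x, u) (mem_univ _)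
    have hV : ∀ x', Q m.1 m.2 ≤ ∑ u', π x' u' * Q x' u' := by
      intro x'
      calc Q m.1 m.2 = ∑ u', π x' u' * Q m.1 m.2 := by
            rw [← Finset.sum_mul, hπ_sum, one_mul]
        _ ≤ ∑ u', π x' u' * Q x' u' :=
            Finset.sum_le_sum fun u' _ =>
              mul_le_mul_of_nonneg_left (hmin x' u') (hπ_nonneg x' u')
    have hP : Q m.1 m.2 ≤ ∑ x', p m.1 m.2 x' * ∑ u', π x' u' * Q x' u' := by
      calc Q m.1 m.2 = ∑ x', p m.1 m.2 x' * Q m.1 m.2 := by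
            rw [← Finset.sum_mul, hp_sum, one_mul]
        _ ≤ _ := Finset.sum_le_sum fun x' _ =>
            mul_le_mul_of_nonneg_left (hV x') (hp_nonneg _ _ _)
    have key : 0 ≤ Q m.1 m.2 := by
      have := hQ m.1 m.2
      nlinarith [hr0 m.1 m.2, mul_le_mul_of_nonneg_left hP hγ0]
    exact fun x u => le_trans key (hmin x u)
  have hhi : ∀ x u, Q x u ≤ 1 / (1 - γ) := by
    obtain ⟨m, -, hm⟩ := Finset.exists_max_image (Finset.univ : Finset (X × U))
      (fun q => Q q.1 q.2) ⟨⟨Classical.arbitrary X, Classical.arbitrary U⟩, mem_univ _⟩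
    have hmax : ∀ x u, Q x u ≤ Q m.1 m.2 := fun x u => hm (x, u) (mem_univ _)
    have hV : ∀ x', ∑ u', π x' u' * Q x' u' ≤ Q m.1 m.2 := by
      intro x'
      calc ∑ u', π x' u' * Q x' u' ≤ ∑ u', π x' u' * Q m.1 m.2 :=
            Finset.sum_le_sum fun u' _ =>
              mul_le_mul_of_nonneg_left (hmax x' u') (hπ_nonneg x' u')
        _ = Q m.1 m.2 := by rw [← Finset.sum_mul, hπ_sum, one_mul]
    have hP : ∑ x', p m.1 m.2 x' * ∑ u', π x' u' * Q x' u' ≤ Q m.1 m.2 := by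
      calc _ ≤ ∑ x', p m.1 m.2 x' * Q m.1 m.2 := Finset.sum_le_sum fun x' _ =>
            mul_le_mul_of_nonneg_left (hV x') (hp_nonneg _ _ _)
        _ = Q m.1 m.2 := by rw [← Finset.sum_mul, hp_sum, one_mul]
    have key : Q m.1 m.2 ≤ 1 / (1 - γ) := by
      have h := hQ m.1 m.2
      rw [le_div_iff₀ h1γ]
      nlinarith [hr1 m.1 m.2, mul_le_mul_of_nonneg_left hP hγ0]
    exact fun x u => le_trans (hmax x u) key
  exact fun x u => ⟨hlo x u, hhi x u⟩

/-- **Corollary 1.**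
For a finite MDP with rewards in `[0,1]`, policies `πb` (behavior), `πi`, `πi1` with
Bellman-consistent Q-functions, and `d` the discounted state visitation distribution
of `πb`:
`Σ_x d(x) Σ_u πb(u|x) A^{πi}(x,u) − (2/(1−γ)) Σ_x d(x) D_TV(πb(·|x), πi1(·|x))
  ≤ (1−γ) (Σ_x μ(x) V^{πi1}(x) − Σ_x μ(x) V^{πi}(x))`,
where `D_TV(P,Q) = (1/2) Σ_u |P u − Q u|`. -/
theorem policy_improvement_tv_bound
    {X U : Type*} [Fintype X] [Fintype U] [Nonempty X] [Nonempty U]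
    (γ : ℝ) (hγ0 : 0 ≤ γ) (hγ1 : γ < 1)
    (p : X → U → X → ℝ)
    (hp_nonneg : ∀ x u x', 0 ≤ p x u x')
    (hp_sum : ∀ x u, ∑ x', p x u x' = 1)
    (r : X → U → ℝ)
    (hr0 : ∀ x u, 0 ≤ r x u) (hr1 : ∀ x u, r x u ≤ 1)
    (πb πi πi1 : X → U → ℝ)
    (hπb_nonneg : ∀ x u, 0 ≤ πb x u) (hπb_sum : ∀ x, ∑ u, πb x u = 1)
    (hπi_nonneg : ∀ x u, 0 ≤ πi x u) (hπi_sum : ∀ x, ∑ u, πi x u = 1)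
    (hπi1_nonneg : ∀ x u, 0 ≤ πi1 x u) (hπi1_sum : ∀ x, ∑ u, πi1 x u = 1)
    (Qb Qi Qi1 : X → U → ℝ)
    (hQb : ∀ x u, Qb x u = r x u + γ * ∑ x', p x u x' * ∑ u', πb x' u' * Qb x' u')
    (hQi : ∀ x u, Qi x u = r x u + γ * ∑ x', p x u x' * ∑ u', πi x' u' * Qi x' u')
    (hQi1 : ∀ x u, Qi1 x u = r x u + γ * ∑ x', p x u x' * ∑ u', πi1 x' u' * Qi1 x' u')
    (μ : X → ℝ) (hμ_nonneg : ∀ x, 0 ≤ μ x) (hμ_sum : ∑ x, μ x = 1)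
    (d : X → ℝ)
    (hd_flow : ∀ x', d x' = (1 - γ) * μ x' + γ * ∑ x, ∑ u, d x * πb x u * p x u x')
    (hd_nonneg : ∀ x, 0 ≤ d x) (hd_sum : ∑ x, d x = 1) :
    (∑ x, d x * ∑ u, πb x u * (Qi x u - ∑ u', πi x u' * Qi x u')) -
        (2 / (1 - γ)) * ∑ x, d x * ((1 / 2) * ∑ u, |πb x u - πi1 x u|) ≤
      (1 - γ) *
        ((∑ x, μ x * ∑ u, πi1 x u * Qi1 x u) - ∑ x, μ x * ∑ u, πi x u * Qi x u) := by
  have h1γ : (0:ℝ) < 1 - γ := by linarith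
  have hQi1_b := q_bounds γ hγ0 hγ1 p hp_nonneg hp_sum r hr0 hr1 πi1 hπi1_nonneg hπi1_sum Qi1 hQi1
  set V0 : X → ℝ := fun x => ∑ u, πi x u * Qi x u with hV0
  set V1 : X → ℝ := fun x => ∑ u, πi1 x u * Qi1 x u with hV1
  have hQi' : ∀ x u, Qi x u = r x u + γ * ∑ x', p x u x' * V0 x' := hQi
  have hQi1' : ∀ x u, Qi1 x u = r x u + γ * ∑ x', p x u x' * V1 x' := hQi1
  -- flow identity
  have hflow : ∑ x, d x * (V1 x - V0 x)
      = (1 - γ) * ∑ x, μ x * (V1 x - V0 x)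
        + γ * ∑ x, d x * ∑ u, πb x u * ∑ x', p x u x' * (V1 x' - V0 x') := by
    have swap : ∑ x', (∑ x, ∑ u, d x * πb x u * p x u x') * (V1 x' - V0 x')
        = ∑ x, d x * ∑ u, πb x u * ∑ x', p x u x' * (V1 x' - V0 x') := by
      simp only [Finset.sum_mul, Finset.mul_sum]
      rw [Finset.sum_comm]
      refine Finset.sum_congr rfl fun x _ => ?_
      rw [Finset.sum_comm]
      exact Finset.sum_congr rfl fun u _ => Finset.sum_congr rfl fun x' _ => by ring
    calc ∑ x', d x' * (V1 x' - V0 x')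
        = ∑ x', ((1 - γ) * μ x' + γ * ∑ x, ∑ u, d x * πb x u * p x u x')
            * (V1 x' - V0 x') :=
          Finset.sum_congr rfl fun x' _ => by rw [← hd_flow x']
      _ = (1 - γ) * ∑ x', μ x' * (V1 x' - V0 x')
          + γ * ∑ x', (∑ x, ∑ u, d x * πb x u * p x u x') * (V1 x' - V0 x') := by
          simp only [add_mul, Finset.sum_add_distrib, mul_assoc, ← Finset.mul_sum]
      _ = _ := by rw [swap]
  -- pointwise inequality
  have hpoint : ∀ x, (∑ u, πb x u * (Qi x u - V0 x))
      - (2 / (1 - γ)) * ((1 / 2) * ∑ u, |πb x u - πi1 x u|)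
      ≤ (V1 x - V0 x) - γ * ∑ u, πb x u * ∑ x', p x u x' * (V1 x' - V0 x') := by
    intro x
    have hA : ∑ u, πb x u * (Qi x u - V0 x) = (∑ u, πb x u * Qi x u) - V0 x := by
      simp only [mul_sub, Finset.sum_sub_distrib, ← Finset.sum_mul, hπb_sum, one_mul]
    have hB : ∑ u, πb x u * Qi x u
        = (∑ u, πb x u * r x u) + γ * ∑ u, πb x u * ∑ x', p x u x' * V0 x' := by
      calc ∑ u, πb x u * Qi x u
          = ∑ u, (πb x u * r x u + γ * (πb x u * ∑ x', p x u x' * V0 x')) :=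
            Finset.sum_congr rfl fun u _ => by rw [hQi' x u]; ring
        _ = _ := by rw [Finset.sum_add_distrib, ← Finset.mul_sum]
    have hC : ∑ u, πb x u * Qi1 x u
        = (∑ u, πb x u * r x u) + γ * ∑ u, πb x u * ∑ x', p x u x' * V1 x' := by
      calc ∑ u, πb x u * Qi1 x u
          = ∑ u, (πb x u * r x u + γ * (πb x u * ∑ x', p x u x' * V1 x')) :=
            Finset.sum_congr rfl fun u _ => by rw [hQi1' x u]; ring
        _ = _ := by rw [Finset.sum_add_distrib, ← Finset.mul_sum]
    have hD : ∑ u, πb x u * ∑ x', p x u x' * (V1 x' - V0 x')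
        = (∑ u, πb x u * ∑ x', p x u x' * V1 x')
          - ∑ u, πb x u * ∑ x', p x u x' * V0 x' := by
      simp only [mul_sub, Finset.sum_sub_distrib]
    have hE : ∑ u, (πi1 x u - πb x u) * Qi1 x u
        = V1 x - ∑ u, πb x u * Qi1 x u := by
      simp only [sub_mul, Finset.sum_sub_distrib, hV1]
    have habs : ∑ u, (πb x u - πi1 x u) * Qi1 x u
        ≤ (1 / (1 - γ)) * ∑ u, |πb x u - πi1 x u| := by
      rw [Finset.mul_sum]
      refine Finset.sum_le_sum fun u _ => ?_
      obtain ⟨h1, h2⟩ := hQi1_b x u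
      nlinarith [le_abs_self (πb x u - πi1 x u), abs_nonneg (πb x u - πi1 x u)]
    have htv : (2 / (1 - γ)) * ((1 / 2) * ∑ u, |πb x u - πi1 x u|)
        = (1 / (1 - γ)) * ∑ u, |πb x u - πi1 x u| := by ring
    have hsplit : ∑ u, (πb x u - πi1 x u) * Qi1 x u
        = - ∑ u, (πi1 x u - πb x u) * Qi1 x u := by
      rw [← Finset.sum_neg_distrib]
      exact Finset.sum_congr rfl fun u _ => by ring
    have hDγ : γ * ∑ u, πb x u * ∑ x', p x u x' * (V1 x' - V0 x')
        = γ * (∑ u, πb x u * ∑ x', p x u x' * V1 x')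
          - γ * ∑ u, πb x u * ∑ x', p x u x' * V0 x' := by rw [hD]; ring
    linarith [habs, hE, hA, hB, hC, hDγ, hsplit]
  -- combine
  have hmain : (∑ x, d x * ∑ u, πb x u * (Qi x u - V0 x))
      - (2 / (1 - γ)) * ∑ x, d x * ((1 / 2) * ∑ u, |πb x u - πi1 x u|)
      ≤ ∑ x, d x * ((V1 x - V0 x)
          - γ * ∑ u, πb x u * ∑ x', p x u x' * (V1 x' - V0 x')) := by
    rw [Finset.mul_sum, ← Finset.sum_sub_distrib]
    refine Finset.sum_le_sum fun x _ => ?_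
    calc d x * (∑ u, πb x u * (Qi x u - V0 x))
          - (2 / (1 - γ)) * (d x * ((1 / 2) * ∑ u, |πb x u - πi1 x u|))
        = d x * ((∑ u, πb x u * (Qi x u - V0 x))
            - (2 / (1 - γ)) * ((1 / 2) * ∑ u, |πb x u - πi1 x u|)) := by ring
      _ ≤ _ := mul_le_mul_of_nonneg_left (hpoint x) (hd_nonneg x)
  have hright : ∑ x, d x * ((V1 x - V0 x)
        - γ * ∑ u, πb x u * ∑ x', p x u x' * (V1 x' - V0 x'))
      = (1 - γ) * ((∑ x, μ x * V1 x) - ∑ x, μ x * V0 x) := by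
    have hstep : ∑ x, d x * ((V1 x - V0 x)
          - γ * ∑ u, πb x u * ∑ x', p x u x' * (V1 x' - V0 x'))
        = (∑ x, d x * (V1 x - V0 x))
          - γ * ∑ x, d x * ∑ u, πb x u * ∑ x', p x u x' * (V1 x' - V0 x') := by
      have hg : ∀ F : X → ℝ, ∑ x, d x * (γ * F x) = γ * ∑ x, d x * F x := fun F => by
        rw [Finset.mul_sum]
        exact Finset.sum_congr rfl fun x _ => by ring
      simp only [mul_sub, Finset.sum_sub_distrib]
      rw [hg, hg]
    have h2 : (1 - γ) * ∑ x, μ x * (V1 x - V0 x)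
        = (1 - γ) * ((∑ x, μ x * V1 x) - ∑ x, μ x * V0 x) := by
      simp only [mul_sub, Finset.sum_sub_distrib]
    rw [hstep]
    linarith [hflow, h2]
  exact hmain.trans_eq hright
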